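/- arXiv:2009.07370 — 2 statements merged into one kernel-verified Lean document; each statement's English description precedes it below -/
import Mathlib

section
/- Define s_n := 1 + ∑_{m=1}^{n−1} ⌈m/2⌉·(m+2)!. Then for all integers k with 10 ≤ k ≤ n + 2, one has sin²(s_n π / k!) > 3/4. -/
open Real Nat

/-- s_n = 1 + ∑_{m=1}^{n-1} ⌈m/2⌉·(m+2)! . -/
noncomputable def s (n : ℕ) : ℤ :=
  1 + ∑ m ∈ Finset.Icc 1 (n - 1), ⌈(m : ℚ) / 2⌉ * ((m + 2)! : ℤ)

lemma ceil_bounds (m : ℕ) : (m : ℤ) ≤ 2 * ⌈(m : ℚ) / 2⌉ ∧ 2 * ⌈(m : ℚ) / 2⌉ ≤ m + 1 := by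
  constructor
  · have h := Int.le_ceil ((m : ℚ) / 2)
    have h2 : (m : ℚ) ≤ 2 * (⌈(m : ℚ) / 2⌉ : ℤ) := by push_cast; linarith
    exact_mod_cast h2
  · have h := Int.ceil_lt_add_one ((m : ℚ) / 2)
    have h2 : (2 * (⌈(m : ℚ) / 2⌉ : ℤ) : ℚ) < m + 2 := by push_cast; linarith
    have h3 : (2 * ⌈(m : ℚ) / 2⌉ : ℤ) < (m : ℤ) + 2 := by exact_mod_cast h2
    omega

lemma s_succ (k : ℕ) (hk : 3 ≤ k) :
    s (k - 1) = s (k - 2) + ⌈((k - 2 : ℕ) : ℚ) / 2⌉ * (k ! : ℤ) := by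
  obtain ⟨j, rfl⟩ : ∃ j, k = j + 3 := ⟨k - 3, by omega⟩
  show s (j + 2) = s (j + 1) + _
  unfold s
  rw [show j + 2 - 1 = j + 1 from rfl, show j + 1 - 1 = j from rfl,
    show Finset.Icc 1 (j + 1) = insert (j+1) (Finset.Icc 1 j) by
      ext a; simp [Finset.mem_Icc, Finset.mem_insert]; omega,
    Finset.sum_insert (by simp)]
  have : j + 1 + 2 = j + 3 := by ring
  rw [this, show j + 3 - 2 = j + 1 from rfl]
  ring

lemma key : ∀ k : ℕ, 10 ≤ k → (k ! : ℤ) < 3 * s (k - 2) ∧ 3 * s (k - 2) < 2 * (k ! : ℤ) := by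
  intro k hk
  induction k, hk using Nat.le_induction with
  | base =>
    have hs : s 8 = 1589311 := by
      unfold s
      rw [show Finset.Icc 1 (8-1) = {1,2,3,4,5,6,7} from rfl]
      have c1 : ⌈(1 : ℚ) / 2⌉ = 1 := by norm_num [Int.ceil_eq_iff]
      have c3 : ⌈(3 : ℚ) / 2⌉ = 2 := by norm_num [Int.ceil_eq_iff]
      have c5 : ⌈(5 : ℚ) / 2⌉ = 3 := by norm_num [Int.ceil_eq_iff]
      have c7 : ⌈(7 : ℚ) / 2⌉ = 4 := by norm_num [Int.ceil_eq_iff]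
      norm_num [Nat.factorial, c1, c3, c5, c7]
    rw [show (10 : ℕ) - 2 = 8 from rfl, hs]
    norm_num [Nat.factorial]
  | succ k hk ih =>
    obtain ⟨h1, h2⟩ := ih
    have hstep := s_succ k (by omega)
    set c : ℤ := ⌈((k - 2 : ℕ) : ℚ) / 2⌉ with hc
    obtain ⟨hc1, hc2⟩ := ceil_bounds (k - 2)
    rw [← hc] at hc1 hc2
    have hk1 : ((k - 2 : ℕ) : ℤ) = (k : ℤ) - 2 := by
      push_cast [Nat.cast_sub (by omega : 2 ≤ k)]; ring
    rw [hk1] at hc1 hc2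
    have hfac : ((k + 1)! : ℤ) = (k + 1) * (k ! : ℤ) := by
      push_cast [Nat.factorial_succ]; ring
    have hfacpos : (0 : ℤ) < (k ! : ℤ) := by exact_mod_cast Nat.factorial_pos k
    have hkk : (10 : ℤ) ≤ (k : ℤ) := by exact_mod_cast hk
    rw [show k + 1 - 2 = k - 1 from rfl, hstep, hfac]
    constructor
    · -- (k+1) * k! < 3 * (s (k-1) + c * k!)
      have h3c : (k : ℤ) ≤ 3 * c := by linarith
      nlinarith
    · have h3c : 3 * c ≤ 2 * (k : ℤ) := by linarith
      nlinarith

theorem stmt_14 (n : ℕ) (hn : 1 ≤ n) :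
    ∀ k : ℕ, 10 ≤ k → k ≤ n + 2 →
      3 / 4 < Real.sin ((s n : ℝ) * π / (k ! : ℝ)) ^ 2 := by
  intro k hk hkn
  -- divisibility: k! ∣ s n - s (k-2)
  have hdvd : (k ! : ℤ) ∣ s n - s (k - 2) := by
    unfold s
    have hsplit : Finset.Icc 1 (n - 1) = Finset.Icc 1 (k - 3) ∪ Finset.Ioc (k - 3) (n - 1) := by
      ext a; simp [Finset.mem_Icc, Finset.mem_Ioc, Finset.mem_union]; omega
    have hdisj : Disjoint (Finset.Icc 1 (k - 3)) (Finset.Ioc (k - 3) (n - 1)) := by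
      simp [Finset.disjoint_left]
      intro a _ ha2 ha3
      omega
    rw [hsplit, Finset.sum_union hdisj]
    have : (1 + (∑ m ∈ Finset.Icc 1 (k-3), ⌈(m : ℚ) / 2⌉ * ((m + 2)! : ℤ)
        + ∑ m ∈ Finset.Ioc (k-3) (n-1), ⌈(m : ℚ) / 2⌉ * ((m + 2)! : ℤ)))
        - (1 + ∑ m ∈ Finset.Icc 1 (k - 2 - 1), ⌈(m : ℚ) / 2⌉ * ((m + 2)! : ℤ))
        = ∑ m ∈ Finset.Ioc (k-3) (n-1), ⌈(m : ℚ) / 2⌉ * ((m + 2)! : ℤ) := by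
      rw [show k - 2 - 1 = k - 3 from by omega]
      ring
    rw [this]
    apply Finset.dvd_sum
    intro m hm
    simp only [Finset.mem_Ioc] at hm
    exact Dvd.dvd.mul_left
      (Int.natCast_dvd_natCast.mpr (Nat.factorial_dvd_factorial (by omega))) _
  obtain ⟨d, hd⟩ := hdvd
  obtain ⟨hb1, hb2⟩ := key k hk
  have hfacpos : (0 : ℝ) < (k ! : ℝ) := by exact_mod_cast Nat.factorial_pos k
  have hsn : (s n : ℝ) = (s (k - 2) : ℝ) + (k ! : ℝ) * (d : ℝ) := by
    have : s n = s (k - 2) + (k ! : ℤ) * d := by linarith [hd]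
    rw [this]; push_cast; ring
  have hx : (s n : ℝ) * π / (k ! : ℝ) = (s (k - 2) : ℝ) * π / (k ! : ℝ) + (d : ℝ) * π := by
    rw [hsn, add_mul, add_div]; congr 1; field_simp
  rw [hx]
  set x : ℝ := (s (k - 2) : ℝ) * π / (k ! : ℝ) with hxdef
  rw [Real.sin_add_int_mul_pi]
  have hsq : ((-1 : ℝ) ^ d * Real.sin x) ^ 2 = Real.sin x ^ 2 := by
    rcases Int.even_or_odd d with he | he
    · rw [he.neg_one_zpow]; ring
    · rw [Odd.neg_one_zpow he]; ring
  rw [hsq]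
  -- now π/3 < x < 2π/3
  have hpi := Real.pi_pos
  have hxl : π / 3 < x := by
    rw [hxdef, div_lt_div_iff₀ (by norm_num) hfacpos]
    have h1' : (k ! : ℝ) < 3 * (s (k - 2) : ℝ) := by exact_mod_cast hb1
    nlinarith
  have hxu : x < 2 * π / 3 := by
    rw [hxdef, div_lt_div_iff₀ hfacpos (by norm_num)]
    have h2' : 3 * (s (k - 2) : ℝ) < 2 * (k ! : ℝ) := by exact_mod_cast hb2
    nlinarith
  have hcos1 : Real.cos x < 1 / 2 := by
    have := Real.cos_lt_cos_of_nonneg_of_le_pi (by positivity) (by linarith) hxl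
    rwa [Real.cos_pi_div_three] at this
  have hcos2 : -(1 / 2) < Real.cos x := by
    have h23 : x < π - π / 3 := by linarith
    have := Real.cos_lt_cos_of_nonneg_of_le_pi
      (le_of_lt (lt_trans (by positivity) hxl)) (by linarith) h23
    rwa [Real.cos_pi_sub, Real.cos_pi_div_three] at this
  have := Real.sin_sq_add_cos_sq x
  nlinarith
end

section
/- Define s_n := 1 + ∑_{m=1}^{n−1} ⌈m/2⌉·(m+2)! and let 0 < ξ_k ≤ ξ₁ be decreasing. Then for n ≥ 8, 3(n−7)ξ_{n+2}² ≤ 4∑_{k≥1} ξ_k² sin²(s_n π/k!) < 4(n+2)ξ₁² + π²ξ_{n+3}²/((n+3)² − 1). In particular, if ξ_k ≡ 1, then 4∑_{k≥1} sin²(s_n π/k!) → ∞ and grows like Θ(n). -/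
open Real Nat

lemma ceil_lb (m : ℕ) : (m : ℤ) ≤ 2 * ⌈(m : ℚ) / 2⌉ := by
  have := Int.le_ceil ((m:ℚ)/2)
  have : (m:ℚ) ≤ 2 * ⌈(m : ℚ) / 2⌉ := by linarith
  exact_mod_cast this

lemma ceil_ub (m : ℕ) : 2 * ⌈(m : ℚ) / 2⌉ ≤ (m : ℤ) + 1 := by
  have := Int.ceil_lt_add_one ((m:ℚ)/2)
  have : (2:ℚ) * ⌈(m : ℚ) / 2⌉ < m + 2 := by linarith
  have h2 : (2 * ⌈(m : ℚ) / 2⌉ : ℤ) < m + 2 := by exact_mod_cast this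
  omega

lemma ceil_lb3 (m : ℕ) (hm : 4 ≤ m) : (m : ℤ) + 2 ≤ 3 * ⌈(m : ℚ) / 2⌉ := by
  have := Int.le_ceil ((m:ℚ)/2)
  have hm' : (4:ℚ) ≤ m := by exact_mod_cast hm
  have : (m:ℚ) + 2 ≤ 3 * ⌈(m : ℚ) / 2⌉ := by linarith
  exact_mod_cast this

lemma ceil_nonneg' (m : ℕ) : 0 ≤ ⌈(m : ℚ) / 2⌉ :=
  Int.ceil_nonneg (by positivity)

lemma s_rec (n : ℕ) (hn : 1 ≤ n) :
    s (n + 1) = s n + ⌈(n : ℚ) / 2⌉ * ((n + 2)! : ℤ) := by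
  unfold s
  rw [show n + 1 - 1 = (n - 1) + 1 by omega,
    Finset.sum_Icc_succ_top (by omega : 1 ≤ n - 1 + 1)]
  rw [show n - 1 + 1 = n by omega]
  ring

lemma s_pos (n : ℕ) : 1 ≤ s n := by
  unfold s
  have : (0:ℤ) ≤ ∑ m ∈ Finset.Icc 1 (n - 1), ⌈(m : ℚ) / 2⌉ * ((m + 2)! : ℤ) := by
    apply Finset.sum_nonneg
    intro m _
    exact mul_nonneg (ceil_nonneg' m) (by positivity)
  omega

lemma s_dvd (p q : ℕ) (hpq : p ≤ q) : ((p + 2)! : ℤ) ∣ s q - s p := by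
  induction q with
  | zero => interval_cases p; simp
  | succ q ih =>
    rcases Nat.lt_or_ge p (q+1) with h | h
    · have hq : p ≤ q := by omega
      rcases Nat.eq_zero_or_pos q with hq0 | hq1
      · subst hq0
        have hp0 : p = 0 := by omega
        subst hp0
        have : s 1 = s 0 := by unfold s; rfl
        rw [this]; simpa using ih (le_refl 0)
      · rw [s_rec q hq1]
        have h1 : ((p+2)! : ℤ) ∣ ⌈(q : ℚ) / 2⌉ * ((q + 2)! : ℤ) := by
          apply Dvd.dvd.mul_left
          exact_mod_cast Int.natCast_dvd_natCast.mpr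
            (Nat.factorial_dvd_factorial (by omega))
        have h2 := ih hq
        have : s q + ⌈(q : ℚ) / 2⌉ * ((q + 2)! : ℤ) - s p
            = (s q - s p) + ⌈(q : ℚ) / 2⌉ * ((q + 2)! : ℤ) := by ring
        rw [this]
        exact dvd_add h2 h1
    · have : p = q + 1 := by omega
      subst this; simp

lemma s_ub (m : ℕ) (hm : 1 ≤ m) : 2 * s m < ((m + 2)! : ℤ) := by
  induction m with
  | zero => omega
  | succ m ih =>
    rcases Nat.eq_zero_or_pos m with h0 | h1
    · subst h0
      have : s 1 = 1 := by unfold s; rfl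
      rw [this]; norm_num [factorial]
    · rw [s_rec m h1]
      have ihh := ih h1
      have hc := ceil_ub m
      have hfpos : (0:ℤ) < ((m+2)! : ℤ) := by exact_mod_cast Nat.factorial_pos (m+2)
      have hstep : ((m+3)! : ℤ) = (m+3) * ((m+2)! : ℤ) := by
        push_cast [Nat.factorial_succ]; ring
      have : 2 * (s m + ⌈(m : ℚ) / 2⌉ * ((m + 2)! : ℤ))
          = 2 * s m + (2 * ⌈(m : ℚ) / 2⌉) * ((m + 2)! : ℤ) := by ring
      rw [this, show m + 1 + 2 = m + 3 from rfl, hstep]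
      nlinarith [mul_le_mul_of_nonneg_right hc (le_of_lt hfpos)]

lemma s_lb (m : ℕ) (hm : 4 ≤ m) : ((m + 2)! : ℤ) ≤ 3 * s m := by
  induction m with
  | zero => omega
  | succ m ih =>
    rcases Nat.lt_or_ge m 4 with h4 | h4
    · have : m = 3 := by omega
      subst this
      have : s 4 = 271 := by
        unfold s
        rw [show Finset.Icc 1 (4-1) = {1,2,3} from rfl]
        norm_num [Finset.sum_insert, factorial,
          show ⌈(1:ℚ)/2⌉ = 1 by rw [Int.ceil_eq_iff] <;> norm_num,
          show ⌈(2:ℚ)/2⌉ = 1 by rw [Int.ceil_eq_iff] <;> norm_num,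
          show ⌈(3:ℚ)/2⌉ = 2 by rw [Int.ceil_eq_iff] <;> norm_num]
      rw [this]; norm_num [factorial]
    · rw [s_rec m (by omega)]
      have ihh := ih h4
      have hc := ceil_lb3 m h4
      have hfpos : (0:ℤ) < ((m+2)! : ℤ) := by exact_mod_cast Nat.factorial_pos (m+2)
      have hstep : ((m+3)! : ℤ) = (m+3) * ((m+2)! : ℤ) := by
        push_cast [Nat.factorial_succ]; ring
      have : 3 * (s m + ⌈(m : ℚ) / 2⌉ * ((m + 2)! : ℤ))
          = 3 * s m + (3 * ⌈(m : ℚ) / 2⌉) * ((m + 2)! : ℤ) := by ring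
      rw [show m + 1 + 2 = m + 3 from rfl, hstep, this]
      nlinarith [mul_le_mul_of_nonneg_right hc (le_of_lt hfpos)]

lemma sin_sq_periodic (x : ℝ) (M : ℤ) : Real.sin (x + M * π) ^ 2 = Real.sin x ^ 2 := by
  rw [Real.sin_add_int_mul_pi, mul_pow]
  rcases Int.even_or_odd M with h | h
  · rw [h.neg_one_zpow]; ring
  · rw [Odd.neg_one_zpow h]; ring

lemma sin_third {x : ℝ} (h1 : 1/3 ≤ x) (h2 : x ≤ 1/2) :
    (3:ℝ)/4 ≤ Real.sin (x * π) ^ 2 := by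
  have hpi := Real.pi_pos
  have hmem1 : π/3 ∈ Set.Icc (-(π/2)) (π/2) := by
    constructor <;> nlinarith
  have hmem2 : x * π ∈ Set.Icc (-(π/2)) (π/2) := by
    constructor <;> nlinarith
  have hmono := Real.strictMonoOn_sin.monotoneOn hmem1 hmem2 (by nlinarith)
  rw [Real.sin_pi_div_three] at hmono
  have h3 : (0:ℝ) ≤ Real.sqrt 3 / 2 := by positivity
  calc (3:ℝ)/4 = (Real.sqrt 3 / 2)^2 := by
        rw [div_pow, Real.sq_sqrt (by norm_num : (3:ℝ) ≥ 0)]; norm_num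
    _ ≤ Real.sin (x * π) ^ 2 := by
        apply pow_le_pow_left₀ h3 hmono

lemma key_term (n k : ℕ) (h5 : 5 ≤ k) (hk : k ≤ n) :
    (3:ℝ)/4 ≤ Real.sin ((s n : ℝ) * π / ((k+1)! : ℝ)) ^ 2 := by
  have hidx : k - 1 + 2 = k + 1 := by omega
  obtain ⟨M, hM⟩ := s_dvd (k-1) n (by omega)
  rw [hidx] at hM
  have hF : (0:ℝ) < ((k+1)! : ℝ) := by exact_mod_cast Nat.factorial_pos (k+1)
  have hx : (s n : ℝ) * π / ((k+1)! : ℝ)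
      = ((s (k-1) : ℝ) / ((k+1)! : ℝ)) * π + M * π := by
    have : (s n : ℝ) = (s (k-1) : ℝ) + ((k+1)! : ℝ) * M := by
      have : (s n : ℝ) - (s (k-1) : ℝ) = ((k+1)! : ℝ) * M := by exact_mod_cast congrArg Int.cast hM
      linarith
    rw [this]; field_simp
  rw [hx, sin_sq_periodic]
  apply sin_third
  · have h1 := s_lb (k-1) (by omega)
    rw [hidx] at h1
    have h1' : ((k+1)! : ℝ) ≤ 3 * (s (k-1) : ℝ) := by exact_mod_cast h1
    rw [le_div_iff₀ hF]
    linarith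
  · have h2 := s_ub (k-1) (by omega)
    rw [hidx] at h2
    have h2' : 2 * (s (k-1) : ℝ) ≤ ((k+1)! : ℝ) := by exact_mod_cast le_of_lt h2
    rw [div_le_iff₀ hF]
    linarith

lemma sq_fact_summable : Summable (fun k : ℕ => (((k+1)! : ℝ) ^ 2)⁻¹) := by
  refine Summable.of_nonneg_of_le (fun k => by positivity) (fun k => ?_)
    (summable_geometric_of_lt_one (by norm_num) (by norm_num : (1/2:ℝ) < 1))
  have h1 : (2:ℕ)^k ≤ (k+1)! := by
    simpa [Nat.add_comm] using Nat.factorial_mul_pow_le_factorial (m := 1) (n := k)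
  have h1' : (2:ℝ)^k ≤ ((k+1)! : ℝ) := by exact_mod_cast h1
  have h2 : (1:ℝ) ≤ ((k+1)! : ℝ) := by exact_mod_cast Nat.one_le_iff_ne_zero.mpr (Nat.factorial_ne_zero _)
  have hp : (0:ℝ) < (2:ℝ)^k := by positivity
  calc (((k+1)! : ℝ) ^ 2)⁻¹ ≤ ((2:ℝ)^k)⁻¹ := by
        apply inv_anti₀ hp
        nlinarith
    _ = (1/2:ℝ)^k := by rw [one_div, inv_pow]

lemma main_summable (ξ : ℕ → ℝ) (hb : ∀ k, ξ k ≤ ξ 0) (hnn : ∀ k, 0 ≤ ξ k) (n : ℕ) :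
    Summable (fun k : ℕ => (ξ k)^2 * Real.sin ((s n : ℝ) * π / ((k + 1)! : ℝ)) ^ 2) := by
  refine Summable.of_nonneg_of_le (fun k => by positivity) (fun k => ?_)
    ((sq_fact_summable.mul_left ((ξ 0)^2 * ((s n : ℝ)^2 * π^2))))
  have hF : (0:ℝ) < ((k+1)! : ℝ) := by exact_mod_cast Nat.factorial_pos (k+1)
  have hsin : Real.sin ((s n : ℝ) * π / ((k + 1)! : ℝ)) ^ 2
      ≤ ((s n : ℝ) * π / ((k + 1)! : ℝ)) ^ 2 := Real.sin_sq_le_sq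
  have hξ : (ξ k)^2 ≤ (ξ 0)^2 := by nlinarith [hb k, hnn k]
  have hsq : ((s n : ℝ) * π / ((k + 1)! : ℝ)) ^ 2
      = ((s n : ℝ)^2 * π^2) * (((k+1)! : ℝ) ^ 2)⁻¹ := by
    field_simp
  calc (ξ k)^2 * Real.sin ((s n : ℝ) * π / ((k + 1)! : ℝ)) ^ 2
      ≤ (ξ 0)^2 * (((s n : ℝ)^2 * π^2) * (((k+1)! : ℝ) ^ 2)⁻¹) := by
        rw [← hsq]
        apply mul_le_mul hξ hsin (by positivity) (by positivity)
    _ = (ξ 0)^2 * ((s n : ℝ)^2 * π^2) * (((k+1)! : ℝ) ^ 2)⁻¹ := by ring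

lemma lower_bound (ξ : ℕ → ℝ) (hpos : ∀ k, 0 < ξ k) (hdec : ∀ k, ξ (k + 1) ≤ ξ k)
    (n : ℕ) (hn : 8 ≤ n) :
    3 * ((n : ℝ) - 7) * ξ (n + 1) ^ 2
      ≤ 4 * ∑' k : ℕ, (ξ k) ^ 2 * Real.sin ((s n : ℝ) * π / ((k + 1)! : ℝ)) ^ 2 := by
  have hanti : Antitone ξ := antitone_nat_of_succ_le hdec
  have hsum := main_summable ξ (fun k => hanti (Nat.zero_le k)) (fun k => (hpos k).le) n
  set f := fun k : ℕ => (ξ k) ^ 2 * Real.sin ((s n : ℝ) * π / ((k + 1)! : ℝ)) ^ 2 with hf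
  have hstep : ∀ k ∈ Finset.Icc 5 n, (3/4) * ξ (n+1)^2 ≤ f k := by
    intro k hk
    rw [Finset.mem_Icc] at hk
    have h1 : ξ (n+1) ≤ ξ k := hanti (by omega)
    have h2 : ξ (n+1)^2 ≤ ξ k ^2 := by nlinarith [hpos (n+1)]
    have h3 := key_term n k hk.1 hk.2
    have h4 : (0:ℝ) ≤ ξ (n+1)^2 := by positivity
    calc (3/4) * ξ (n+1)^2 ≤ ξ k ^ 2 * (3/4) := by nlinarith
      _ ≤ f k := by
          apply mul_le_mul_of_nonneg_left h3 (by positivity)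
  have hcard : (Finset.Icc 5 n).card = n - 4 := by
    rw [Nat.card_Icc]; omega
  have hsum_lb : ((n : ℝ) - 4) * ((3/4) * ξ (n+1)^2) ≤ ∑ k ∈ Finset.Icc 5 n, f k := by
    have := Finset.card_nsmul_le_sum (Finset.Icc 5 n) f ((3/4) * ξ (n+1)^2) hstep
    rw [hcard, nsmul_eq_mul] at this
    have hc : ((n - 4 : ℕ) : ℝ) = (n : ℝ) - 4 := by
      push_cast [Nat.cast_sub (by omega : 4 ≤ n)]; ring
    rwa [hc] at this
  have htsum : ∑ k ∈ Finset.Icc 5 n, f k ≤ ∑' k, f k :=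
    hsum.sum_le_tsum _ (fun k _ => by positivity)
  nlinarith [sq_nonneg (ξ (n+1)), htsum, hsum_lb]

lemma upper_bound (ξ : ℕ → ℝ) (hpos : ∀ k, 0 < ξ k) (hdec : ∀ k, ξ (k + 1) ≤ ξ k)
    (n : ℕ) (hn : 8 ≤ n) :
    4 * ∑' k : ℕ, (ξ k) ^ 2 * Real.sin ((s n : ℝ) * π / ((k + 1)! : ℝ)) ^ 2
      < 4 * ((n : ℝ) + 2) * (ξ 0) ^ 2
          + π ^ 2 * ξ (n + 2) ^ 2 / (((n : ℝ) + 3) ^ 2 - 1) := by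
  have hanti : Antitone ξ := antitone_nat_of_succ_le hdec
  have hsum := main_summable ξ (fun k => hanti (Nat.zero_le k)) (fun k => (hpos k).le) n
  set f := fun k : ℕ => (ξ k) ^ 2 * Real.sin ((s n : ℝ) * π / ((k + 1)! : ℝ)) ^ 2 with hf
  have hsplit := Summable.sum_add_tsum_nat_add (n+2) hsum
  -- head bound
  have hhead : ∑ i ∈ Finset.range (n+2), f i ≤ ((n:ℝ)+2) * (ξ 0)^2 := by
    have h1 : ∀ i ∈ Finset.range (n+2), f i ≤ (ξ 0)^2 := by
      intro i _
      have h2 : (ξ i)^2 ≤ (ξ 0)^2 := by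
        have := hanti (Nat.zero_le i); nlinarith [hpos i]
      have h3 : Real.sin ((s n : ℝ) * π / ((i + 1)! : ℝ)) ^ 2 ≤ 1 := by
        rw [← Real.sin_sq_add_cos_sq ((s n : ℝ) * π / ((i + 1)! : ℝ))]
        nlinarith [sq_nonneg (Real.cos ((s n : ℝ) * π / ((i + 1)! : ℝ)))]
      calc f i ≤ (ξ i)^2 * 1 := by
            apply mul_le_mul_of_nonneg_left h3 (by positivity)
        _ ≤ (ξ 0)^2 := by linarith
    have := Finset.sum_le_card_nsmul (Finset.range (n+2)) f ((ξ 0)^2) h1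
    rw [Finset.card_range, nsmul_eq_mul] at this
    convert this using 2
    push_cast; rfl
    push_cast; ring
  -- tail bound
  set r : ℝ := ((((n:ℝ)+3))^2)⁻¹ with hr
  have hn3 : (1:ℝ) < ((n:ℝ)+3)^2 := by nlinarith [Nat.cast_nonneg (α := ℝ) n]
  have hr0 : 0 ≤ r := by positivity
  have hr1 : r < 1 := by
    rw [hr, inv_lt_one_iff₀]; right; exact hn3
  set c : ℝ := (((n+2)! : ℝ)^2)⁻¹ with hc
  set C : ℝ := ξ (n+2)^2 * π^2 * ((s n : ℝ))^2 with hC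
  have hfpos : (0:ℝ) < ((n+2)! : ℝ) := by exact_mod_cast Nat.factorial_pos (n+2)
  -- per-term factorial bound
  have hfac : ∀ i : ℕ, ((((i+(n+2)+1))! : ℝ)^2)⁻¹ ≤ c * r^(i+1) := by
    intro i
    have h1 : (n+2)! * (n+3)^(i+1) ≤ (i+(n+2)+1)! := by
      have := Nat.factorial_mul_pow_le_factorial (m := n+2) (n := i+1)
      have he : n + 2 + (i+1) = i + (n+2) + 1 := by omega
      rwa [he, show n + 2 + 1 = n + 3 from rfl] at this
    have h1' : ((n+2)! : ℝ) * ((n:ℝ)+3)^(i+1) ≤ (((i+(n+2)+1))! : ℝ) := by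
      exact_mod_cast h1
    have hpow : (0:ℝ) < ((n:ℝ)+3)^(i+1) := by positivity
    have hFi : (0:ℝ) < (((i+(n+2)+1))! : ℝ) := by exact_mod_cast Nat.factorial_pos _
    rw [hc, hr]
    have : ((((n:ℝ)+3)^2)⁻¹)^(i+1) = ((((n:ℝ)+3)^(i+1))^2)⁻¹ := by
      rw [inv_pow, pow_right_comm]
    rw [this, ← mul_inv]
    apply inv_anti₀ (by positivity)
    rw [← mul_pow]
    apply pow_le_pow_left₀ (by positivity) h1'
  -- tail term bound
  have htail_term : ∀ i : ℕ, f (i + (n+2)) ≤ C * ((((i+(n+2)+1))! : ℝ)^2)⁻¹ := by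
    intro i
    have h2 : (ξ (i+(n+2)))^2 ≤ ξ (n+2)^2 := by
      have := hanti (Nat.le_add_left (n+2) i); nlinarith [hpos (i+(n+2))]
    have hsin : Real.sin ((s n : ℝ) * π / (((i+(n+2)) + 1)! : ℝ)) ^ 2
        ≤ ((s n : ℝ) * π / (((i+(n+2)) + 1)! : ℝ)) ^ 2 := Real.sin_sq_le_sq
    have hFi : (0:ℝ) < (((i+(n+2)+1))! : ℝ) := by exact_mod_cast Nat.factorial_pos _
    have hsq : ((s n : ℝ) * π / (((i+(n+2)) + 1)! : ℝ)) ^ 2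
        = π^2 * ((s n : ℝ))^2 * ((((i+(n+2)+1))! : ℝ)^2)⁻¹ := by
      field_simp
    calc f (i + (n+2)) ≤ ξ (n+2)^2 * ((s n : ℝ) * π / (((i+(n+2)) + 1)! : ℝ)) ^ 2 := by
          apply mul_le_mul h2 hsin (by positivity) (by positivity)
      _ = C * ((((i+(n+2)+1))! : ℝ)^2)⁻¹ := by rw [hsq, hC]; ring
  -- summabilities
  have hsum_shift : Summable (fun i : ℕ => ((((i+(n+2)+1))! : ℝ)^2)⁻¹) := by
    have := sq_fact_summable.comp_injective (add_left_injective (n+2))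
    exact this
  have hsum_geo : Summable (fun i : ℕ => c * r^(i+1)) := by
    have : Summable (fun i : ℕ => r^i) := summable_geometric_of_lt_one hr0 hr1
    exact ((this.mul_left (c * r)).congr (fun i => by rw [pow_succ]; ring))
  -- tail tsum bounds
  have htail1 : ∑' i, f (i + (n+2)) ≤ C * ∑' i, ((((i+(n+2)+1))! : ℝ)^2)⁻¹ := by
    rw [← tsum_mul_left]
    refine ((summable_nat_add_iff (n+2)).2 hsum).tsum_le_tsum htail_term
      (hsum_shift.mul_left C)
  have htail2 : ∑' i, ((((i+(n+2)+1))! : ℝ)^2)⁻¹ ≤ c * (((n:ℝ)+3)^2 - 1)⁻¹ := by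
    have hgeo : ∑' i, (c * r^(i+1)) = c * (((n:ℝ)+3)^2 - 1)⁻¹ := by
      have h1 : ∑' i : ℕ, (c * r^(i+1)) = (c * r) * ∑' i : ℕ, r^i := by
        rw [← tsum_mul_left]
        congr 1; funext i; rw [pow_succ]; ring
      rw [h1, tsum_geometric_of_lt_one hr0 hr1]
      rw [hr]
      have h2 : ((n:ℝ)+3)^2 - 1 ≠ 0 := by nlinarith
      have h3 : ((n:ℝ)+3)^2 ≠ 0 := by nlinarith
      field_simp
    rw [← hgeo]
    exact hsum_shift.tsum_le_tsum hfac hsum_geo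
  -- strict scalar bound
  have hs1 : (1:ℝ) ≤ (s n : ℝ) := by exact_mod_cast s_pos n
  have hs2 : 2 * (s n : ℝ) < ((n+2)! : ℝ) := by exact_mod_cast s_ub n (by omega)
  have hd : (0:ℝ) < ((n:ℝ)+3)^2 - 1 := by nlinarith
  have hξp := hpos (n+2)
  have hpip := Real.pi_pos
  have hkey : ((s n : ℝ))^2 * (((n+2)! : ℝ)^2)⁻¹ < 4⁻¹ := by
    rw [← div_eq_mul_inv, div_lt_iff₀ (by positivity)]
    nlinarith
  have hCc : C * c < π ^ 2 * ξ (n + 2) ^ 2 / 4 := by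
    rw [hC, hc]
    calc ξ (n+2)^2 * π^2 * ((s n : ℝ))^2 * (((n+2)! : ℝ)^2)⁻¹
        = (ξ (n+2)^2 * π^2) * (((s n : ℝ))^2 * (((n+2)! : ℝ)^2)⁻¹) := by ring
      _ < (ξ (n+2)^2 * π^2) * 4⁻¹ := by
          apply mul_lt_mul_of_pos_left hkey (by positivity)
      _ = π ^ 2 * ξ (n + 2) ^ 2 / 4 := by ring
  have hfinal : C * (c * (((n:ℝ)+3)^2 - 1)⁻¹)
      < π ^ 2 * ξ (n + 2) ^ 2 / (((n : ℝ) + 3) ^ 2 - 1) / 4 := by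
    have h5 := mul_lt_mul_of_pos_right hCc (inv_pos.2 hd)
    calc C * (c * (((n:ℝ)+3)^2 - 1)⁻¹) = (C * c) * (((n:ℝ)+3)^2 - 1)⁻¹ := by ring
      _ < (π ^ 2 * ξ (n + 2) ^ 2 / 4) * (((n:ℝ)+3)^2 - 1)⁻¹ := h5
      _ = π ^ 2 * ξ (n + 2) ^ 2 / (((n : ℝ) + 3) ^ 2 - 1) / 4 := by
          field_simp
  -- put together
  have htail : ∑' i, f (i + (n+2))
      < π ^ 2 * ξ (n + 2) ^ 2 / (((n : ℝ) + 3) ^ 2 - 1) / 4 := by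
    calc ∑' i, f (i + (n+2)) ≤ C * ∑' i, ((((i+(n+2)+1))! : ℝ)^2)⁻¹ := htail1
      _ ≤ C * (c * (((n:ℝ)+3)^2 - 1)⁻¹) := by
          apply mul_le_mul_of_nonneg_left htail2 (by rw [hC]; positivity)
      _ < _ := hfinal
  rw [← hsplit]
  linarith [hhead, htail]

/-- Bounds for ‖𝐑^{s_n} 0‖² = 4∑_{k≥1} ξ_k² sin²(s_n π/k!); here ξ k denotes ξ_{k+1},
    so the sum over k ≥ 1 is over the index k + 1, and ξ₁ = ξ 0. -/
theorem stmt_16 (ξ : ℕ → ℝ) (hpos : ∀ k, 0 < ξ k) (hdec : ∀ k, ξ (k + 1) ≤ ξ k) :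
    (∀ n : ℕ, 8 ≤ n →
      3 * ((n : ℝ) - 7) * ξ (n + 1) ^ 2
          ≤ 4 * ∑' k : ℕ, (ξ k) ^ 2 * Real.sin ((s n : ℝ) * π / ((k + 1)! : ℝ)) ^ 2 ∧
      4 * ∑' k : ℕ, (ξ k) ^ 2 * Real.sin ((s n : ℝ) * π / ((k + 1)! : ℝ)) ^ 2
          < 4 * ((n : ℝ) + 2) * (ξ 0) ^ 2
              + π ^ 2 * ξ (n + 2) ^ 2 / (((n : ℝ) + 3) ^ 2 - 1)) ∧
    ((∀ k, ξ k = 1) →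
      Filter.Tendsto (fun n : ℕ => 4 * ∑' k : ℕ, Real.sin ((s n : ℝ) * π / ((k + 1)! : ℝ)) ^ 2)
        Filter.atTop Filter.atTop) := by
  constructor
  · exact fun n hn => ⟨lower_bound ξ hpos hdec n hn, upper_bound ξ hpos hdec n hn⟩
  · intro h1
    have key : ∀ n : ℕ, 8 ≤ n →
        3 * ((n : ℝ) - 7)
          ≤ 4 * ∑' k : ℕ, Real.sin ((s n : ℝ) * π / ((k + 1)! : ℝ)) ^ 2 := by
      intro n hn
      have h2 := lower_bound ξ hpos hdec n hn
      simp only [h1, one_pow, one_mul, mul_one] at h2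
      exact h2
    have h3 : Filter.Tendsto (fun n : ℕ => 3 * ((n:ℝ) - 7)) Filter.atTop Filter.atTop := by
      have h4 : Filter.Tendsto (fun n : ℕ => (n:ℝ)) Filter.atTop Filter.atTop :=
        tendsto_natCast_atTop_atTop
      have h5 := Filter.tendsto_atTop_add_const_right Filter.atTop (-7 : ℝ) h4
      have h6 := h5.const_mul_atTop (by norm_num : (0:ℝ) < 3)
      simpa [sub_eq_add_neg] using h6
    apply Filter.tendsto_atTop_mono' _ _ h3
    filter_upwards [Filter.eventually_ge_atTop 8] with n hn
    exact key n hn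
end
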